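/- Fix an integer t ≥ 5 and a real number Y with e^{(t−1)/2} < Y < e^t. Then the number of integers n with e^{t−1} < n ≤ e^t such that Z(n) ≤ Y is at most 196 · Y · t². -/

import Mathlib

set_option maxHeartbeats 1000000


/-- The m-th triangular number. -/
def T (m : ℕ) : ℕ := m * (m + 1) / 2

/-- The pseudo-Smarandache function: the least positive m with n ∣ T m. -/
noncomputable def Z (n : ℕ) : ℕ := sInf {m : ℕ | 0 < m ∧ n ∣ T m}

lemma two_T (m : ℕ) : 2 * T m = m * (m + 1) := by
  obtain ⟨r, hr⟩ := Nat.even_mul_succ_self m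
  unfold T
  omega

lemma Z_mem (n : ℕ) (hn : 0 < n) : 0 < Z n ∧ n ∣ T (Z n) := by
  have hne : {m : ℕ | 0 < m ∧ n ∣ T m}.Nonempty := by
    refine ⟨2 * n, by positivity, ?_⟩
    have : T (2 * n) = n * (2 * n + 1) := by
      unfold T
      rw [mul_assoc, Nat.mul_div_cancel_left _ (by norm_num : 0 < 2)]
    rw [this]
    exact Dvd.intro _ rfl
  exact Nat.sInf_mem hne

/-- Decomposition: if n ∣ T m then m*(m+1) = 2n * (u*v) with u ∣ m, v ∣ m+1 coprime. -/
lemma decomp (n m : ℕ) (hm : 0 < m) (hdvd : n ∣ T m) :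
    0 < m / Nat.gcd (2*n) m ∧ 0 < (m+1) / Nat.gcd (2*n) (m+1) ∧
    m / Nat.gcd (2*n) m ∣ m ∧ (m+1) / Nat.gcd (2*n) (m+1) ∣ (m+1) ∧
    Nat.Coprime (m / Nat.gcd (2*n) m) ((m+1) / Nat.gcd (2*n) (m+1)) ∧
    m * (m + 1) = 2 * n * ((m / Nat.gcd (2*n) m) * ((m+1) / Nat.gcd (2*n) (m+1))) := by
  have h2 : 2 * T m = m * (m + 1) := two_T m
  have h2n : 2 * n ∣ m * (m + 1) := by
    obtain ⟨c, hc⟩ := hdvd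
    exact ⟨c, by rw [← h2, hc, mul_assoc]⟩
  have hcop : Nat.Coprime m (m + 1) := by simp
  set a := Nat.gcd (2*n) m with ha_def
  set b := Nat.gcd (2*n) (m+1) with hb_def
  have hab : a * b = 2 * n := by
    have h1 := Nat.Coprime.gcd_mul (2*n) hcop
    rw [Nat.gcd_eq_left h2n] at h1
    exact h1.symm
  have ha : a ∣ m := Nat.gcd_dvd_right _ _
  have hb : b ∣ m + 1 := Nat.gcd_dvd_right _ _
  have hapos : 0 < a := Nat.gcd_pos_of_pos_right _ hm
  have hbpos : 0 < b := Nat.gcd_pos_of_pos_right _ (Nat.succ_pos m)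
  have hu : a * (m / a) = m := Nat.mul_div_cancel' ha
  have hv : b * ((m+1) / b) = m + 1 := Nat.mul_div_cancel' hb
  refine ⟨?_, ?_, Nat.div_dvd_of_dvd ha, Nat.div_dvd_of_dvd hb, ?_, ?_⟩
  · exact Nat.div_pos (Nat.le_of_dvd hm ha) hapos
  · exact Nat.div_pos (Nat.le_of_dvd (Nat.succ_pos m) hb) hbpos
  · exact Nat.Coprime.coprime_dvd_left (Nat.div_dvd_of_dvd ha)
      (Nat.Coprime.coprime_dvd_right (Nat.div_dvd_of_dvd hb) hcop)
  · calc m * (m + 1) = (a * (m / a)) * (b * ((m+1) / b)) := by rw [hu, hv]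
      _ = (a * b) * ((m / a) * ((m+1) / b)) := by ring
      _ = 2 * n * ((m / a) * ((m+1) / b)) := by rw [hab]

/-- Count of m in [1,N] divisible by u with m+1 divisible by v, u,v coprime. -/
lemma count_arith (u v N : ℕ) (hu : 0 < u) (hv : 0 < v) (hco : Nat.Coprime u v) :
    ((Finset.Icc 1 N).filter (fun m => u ∣ m ∧ v ∣ m + 1)).card ≤ N / (u * v) + 1 := by
  have huv : 0 < u * v := Nat.mul_pos hu hv
  have key : ∀ m m', (u ∣ m ∧ v ∣ m + 1) → (u ∣ m' ∧ v ∣ m' + 1) → m ≤ m' →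
      m / (u*v) = m' / (u*v) → m = m' := by
    intro m m' h h' hle hdiv
    by_contra hne
    have hlt : m < m' := lt_of_le_of_ne hle hne
    have hd : u * v ∣ m' - m := by
      refine hco.mul_dvd_of_dvd_of_dvd (Nat.dvd_sub h'.1 h.1) ?_
      have := Nat.dvd_sub h'.2 h.2
      simpa [Nat.succ_sub_succ] using this
    have h1 : u * v ≤ m' - m := Nat.le_of_dvd (by omega) hd
    have h2 : m + u * v ≤ m' := by omega
    have h3 : (m + u * v) / (u * v) ≤ m' / (u * v) := Nat.div_le_div_right h2
    rw [Nat.add_div_right _ huv] at h3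
    omega
  rw [← Finset.card_range (N / (u*v) + 1)]
  apply Finset.card_le_card_of_injOn (fun m => m / (u * v))
  · intro m hm
    simp only [Finset.mem_coe, Finset.mem_filter, Finset.mem_Icc] at hm
    simp only [Finset.mem_coe, Finset.mem_range]
    exact Nat.lt_succ_of_le (Nat.div_le_div_right hm.1.2)
  · intro m hm m' hm' h
    simp only [Finset.coe_filter, Set.mem_setOf_eq, Finset.mem_Icc] at hm hm'
    rcases le_total m m' with hle | hle
    · exact key m m' hm.2 hm'.2 hle h
    · exact (key m' m hm'.2 hm.2 hle h.symm).symm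

theorem stmt_16 (t : ℕ) (ht : 5 ≤ t) (Y : ℝ)
    (hY1 : Real.exp ((t - 1 : ℝ) / 2) < Y) (hY2 : Y < Real.exp t) :
    ({n : ℕ | Real.exp (t - 1 : ℝ) < n ∧ (n : ℝ) ≤ Real.exp t ∧ (Z n : ℝ) ≤ Y}.ncard : ℝ)
      ≤ 196 * Y * t ^ 2 := by
  have ht5 : (5:ℝ) ≤ (t:ℝ) := by exact_mod_cast ht
  have hY1' : (1:ℝ) < Y := by
    have : (1:ℝ) < Real.exp ((t - 1 : ℝ) / 2) := by
      rw [Real.one_lt_exp_iff]; linarith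
    linarith
  have hYpos : (0:ℝ) < Y := by linarith
  set S := {n : ℕ | Real.exp (t - 1 : ℝ) < n ∧ (n : ℝ) ≤ Real.exp t ∧ (Z n : ℝ) ≤ Y} with hS
  set N := ⌊Y⌋₊ with hN
  set K := ⌊Real.exp 1 * Y⌋₊ with hK
  have hNY : (N:ℝ) ≤ Y := Nat.floor_le hYpos.le
  have hKY : (K:ℝ) ≤ Real.exp 1 * Y := Nat.floor_le (by positivity)
  have hexp1 : (0:ℝ) < Real.exp 1 := Real.exp_pos 1
  -- the target finset of triples ((u,v),m)
  set F : Finset ((ℕ × ℕ) × ℕ) :=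
    ((Finset.Icc 1 K ×ˢ Finset.Icc 1 K) ×ˢ Finset.Icc 1 N).filter
      (fun p => p.1.1 ∣ p.2 ∧ p.1.2 ∣ p.2 + 1 ∧ Nat.Coprime p.1.1 p.1.2 ∧ p.1.1 * p.1.2 ≤ K)
    with hF
  -- the map
  set f : ℕ → (ℕ × ℕ) × ℕ := fun n =>
    ((Z n / Nat.gcd (2*n) (Z n), (Z n + 1) / Nat.gcd (2*n) (Z n + 1)), Z n) with hf
  -- facts for n ∈ S
  have hfacts : ∀ n ∈ S, f n ∈ (F : Set ((ℕ × ℕ) × ℕ)) ∧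
      Z n * (Z n + 1) = 2 * n * ((f n).1.1 * (f n).1.2) := by
    intro n hn
    obtain ⟨hn1, hn2, hn3⟩ := hn
    have hnpos : 0 < n := by
      by_contra h
      push_neg at h
      interval_cases n
      · simp at hn1; linarith [Real.exp_pos ((t:ℝ) - 1)]
    obtain ⟨hZpos, hZdvd⟩ := Z_mem n hnpos
    obtain ⟨hu0, hv0, hud, hvd, hcop, heq⟩ := decomp n (Z n) hZpos hZdvd
    set m := Z n
    set u := m / Nat.gcd (2*n) m
    set v := (m+1) / Nat.gcd (2*n) (m+1)
    have hmN : m ≤ N := Nat.le_floor hn3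
    -- real bound on u*v
    have hmY : (m:ℝ) ≤ Y := hn3
    have heqR : (m:ℝ) * (m + 1) = 2 * n * ((u:ℝ) * v) := by exact_mod_cast heq
    have hEn : Real.exp ((t:ℝ) - 1) < (n:ℝ) := hn1
    have hexpt : Real.exp (t:ℝ) = Real.exp 1 * Real.exp ((t:ℝ) - 1) := by
      rw [← Real.exp_add]; ring_nf
    have huvR : ((u:ℝ) * v) ≤ Real.exp 1 * Y := by
      have hE : (0:ℝ) < Real.exp ((t:ℝ) - 1) := Real.exp_pos _
      have huv0 : (0:ℝ) ≤ (u:ℝ) * v := by positivity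
      -- (u*v) * (2 * exp(t-1)) ≤ (u*v)*(2n) = m(m+1) ≤ Y(Y+1) ≤ 2Y² < 2Y exp t = (e Y)(2 exp(t-1))
      have h1 : ((u:ℝ) * v) * (2 * Real.exp ((t:ℝ) - 1)) ≤ (m:ℝ) * (m+1) := by
        rw [heqR]; nlinarith
      have h2 : (m:ℝ) * (m+1) ≤ 2 * Y^2 := by nlinarith
      have h3 : 2 * Y^2 ≤ (Real.exp 1 * Y) * (2 * Real.exp ((t:ℝ) - 1)) := by
        have : Y ≤ Real.exp 1 * Real.exp ((t:ℝ) - 1) := by rw [← hexpt]; linarith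
        nlinarith
      have := le_trans (le_trans h1 h2) h3
      have h4 : (0:ℝ) < 2 * Real.exp ((t:ℝ) - 1) := by positivity
      exact le_of_mul_le_mul_right this h4
    have huvK : u * v ≤ K := Nat.le_floor (by exact_mod_cast huvR)
    have huK : u ≤ K := le_trans (Nat.le_mul_of_pos_right u hv0) huvK
    have hvK : v ≤ K := le_trans (Nat.le_mul_of_pos_left v hu0) huvK
    constructor
    · simp only [Finset.mem_coe, hF, Finset.mem_filter, Finset.mem_product, Finset.mem_Icc]
      exact ⟨⟨⟨⟨hu0, huK⟩, ⟨hv0, hvK⟩⟩, ⟨hZpos, hmN⟩⟩, hud, hvd, hcop, huvK⟩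
    · exact heq
  -- S is finite and injects into F
  have hfin : S.Finite := by
    apply Set.Finite.subset (Set.finite_Iic ⌊Real.exp (t:ℝ)⌋₊)
    intro n hn
    exact Nat.le_floor hn.2.1
  have hcard : S.ncard ≤ F.card := by
    rw [← Set.ncard_coe_finset F]
    apply Set.ncard_le_ncard_of_injOn f (fun n hn => (hfacts n hn).1)
    · intro n hn n' hn' hff
      have hn'pos : 0 < n' := by
        by_contra hc
        push_neg at hc
        interval_cases n'
        have h0 := hn'.1
        push_cast at h0
        linarith [Real.exp_pos ((t:ℝ) - 1)]
      have e1 := (hfacts n hn).2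
      have e2 := (hfacts n' hn').2
      have hZeq : Z n = Z n' := congrArg Prod.snd hff
      rw [hff, hZeq] at e1
      have huvpos : 0 < (f n').1.1 * (f n').1.2 := by
        have hZpos := (Z_mem n' hn'pos).1
        rcases Nat.eq_zero_or_pos ((f n').1.1 * (f n').1.2) with h | h
        · rw [h, mul_zero] at e2
          have hpp : 0 < Z n' * (Z n' + 1) := Nat.mul_pos hZpos (by omega)
          omega
        · exact h
      have h3 : 2 * n * ((f n').1.1 * (f n').1.2) = 2 * n' * ((f n').1.1 * (f n').1.2) := by
        rw [← e1, ← e2]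
      have h4 := Nat.eq_of_mul_eq_mul_right huvpos h3
      omega
  -- count F via fibers over pairs
  set P : Finset (ℕ × ℕ) := (Finset.Icc 1 K ×ˢ Finset.Icc 1 K).filter
      (fun q => Nat.Coprime q.1 q.2 ∧ q.1 * q.2 ≤ K) with hP
  have hFP : ∀ p ∈ F, p.1 ∈ P := by
    intro p hp
    simp only [hF, Finset.mem_filter, Finset.mem_product] at hp
    simp only [hP, Finset.mem_filter, Finset.mem_product]
    exact ⟨hp.1.1, hp.2.2.2.1, hp.2.2.2.2⟩
  have hFcard : F.card = ∑ q ∈ P, (F.filter (fun p => p.1 = q)).card :=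
    Finset.card_eq_sum_card_fiberwise hFP
  have hfiber : ∀ q ∈ P, (F.filter (fun p => p.1 = q)).card ≤ N / (q.1 * q.2) + 1 := by
    intro q hq
    simp only [hP, Finset.mem_filter, Finset.mem_product, Finset.mem_Icc] at hq
    refine le_trans ?_ (count_arith q.1 q.2 N hq.1.1.1 hq.1.2.1 hq.2.1)
    apply Finset.card_le_card_of_injOn (fun p => p.2)
    · intro p hp
      simp only [Finset.mem_coe, Finset.mem_filter, hF, Finset.mem_product] at hp
      simp only [Finset.mem_coe, Finset.mem_filter, Finset.mem_Icc]
      obtain ⟨⟨⟨_, hm⟩, hcond⟩, hpq⟩ := hp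
      rw [← hpq]
      exact ⟨⟨(Finset.mem_Icc.mp hm).1, (Finset.mem_Icc.mp hm).2⟩, hcond.1, hcond.2.1⟩
    · intro p hp p' hp' h
      simp only [Finset.coe_filter, Set.mem_setOf_eq] at hp hp'
      have : p.1 = p'.1 := by rw [hp.2, hp'.2]
      exact Prod.ext this h
  -- pass to reals
  have hstep1 : (F.card : ℝ) ≤ ∑ q ∈ P, ((N:ℝ) / (q.1 * q.2) + 1) := by
    rw [hFcard]
    push_cast
    apply Finset.sum_le_sum
    intro q hq
    have h1 : ((F.filter (fun p => p.1 = q)).card : ℝ) ≤ ((N / (q.1 * q.2) + 1 : ℕ) : ℝ) := by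
      exact_mod_cast hfiber q hq
    refine le_trans h1 ?_
    push_cast
    have := Nat.cast_div_le (α := ℝ) (m := N) (n := q.1 * q.2)
    push_cast at this
    linarith
  have hstep2 : ∑ q ∈ P, ((N:ℝ) / (q.1 * q.2) + 1) ≤
      ∑ q ∈ P, ((N:ℝ) + K) / (q.1 * q.2) := by
    apply Finset.sum_le_sum
    intro q hq
    simp only [hP, Finset.mem_filter, Finset.mem_product, Finset.mem_Icc] at hq
    have hq1 : (0:ℝ) < q.1 := by exact_mod_cast hq.1.1.1
    have hq2 : (0:ℝ) < q.2 := by exact_mod_cast hq.1.2.1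
    have hqK : (q.1:ℝ) * q.2 ≤ K := by exact_mod_cast hq.2.2
    rw [add_div]
    have h1 : (1:ℝ) ≤ (K:ℝ) / (q.1 * q.2) := by
      rw [le_div_iff₀ (by positivity)]
      linarith
    linarith
  set H := ∑ i ∈ Finset.Icc 1 K, ((i:ℝ))⁻¹ with hH
  have hstep3 : ∑ q ∈ P, ((N:ℝ) + K) / (q.1 * q.2) ≤ ((N:ℝ) + K) * (H * H) := by
    have hsub : P ⊆ Finset.Icc 1 K ×ˢ Finset.Icc 1 K := Finset.filter_subset _ _
    have h1 : ∑ q ∈ P, ((N:ℝ) + K) / (q.1 * q.2) ≤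
        ∑ q ∈ Finset.Icc 1 K ×ˢ Finset.Icc 1 K, ((N:ℝ) + K) / (q.1 * q.2) := by
      apply Finset.sum_le_sum_of_subset_of_nonneg hsub
      intro q _ _
      positivity
    refine le_trans h1 ?_
    rw [Finset.sum_product]
    have : ∀ u ∈ Finset.Icc 1 K, ∑ v ∈ Finset.Icc 1 K, ((N:ℝ) + K) / (u * v)
        = ((N:ℝ) + K) * ((u:ℝ))⁻¹ * ∑ v ∈ Finset.Icc 1 K, ((v:ℝ))⁻¹ := by
      intro u _
      rw [Finset.mul_sum]
      apply Finset.sum_congr rfl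
      intro v _
      rw [div_eq_mul_inv, mul_inv]
      ring
    rw [Finset.sum_congr rfl this, ← Finset.sum_mul, ← Finset.mul_sum]
    apply le_of_eq
    ring
  -- bound H
  have hK1 : 1 ≤ K := by
    rw [hK]
    apply Nat.le_floor
    norm_num
    nlinarith [Real.add_one_le_exp (1:ℝ)]
  have hHpos : 0 ≤ H := by
    apply Finset.sum_nonneg
    intro i _
    positivity
  have hHle : H ≤ (t:ℝ) + 2 := by
    have h1 : H = ((harmonic K : ℚ) : ℝ) := by
      rw [hH, harmonic_eq_sum_Icc]
      push_cast
      rfl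
    rw [h1]
    refine le_trans (harmonic_le_one_add_log K) ?_
    have hKpos : (0:ℝ) < K := by exact_mod_cast hK1
    have h2 : Real.log K ≤ Real.log (Real.exp 1 * Y) :=
      Real.log_le_log hKpos hKY
    rw [Real.log_mul (Real.exp_ne_zero 1) (ne_of_gt hYpos), Real.log_exp] at h2
    have h3 : Real.log Y < (t:ℝ) := by
      rw [Real.log_lt_iff_lt_exp hYpos]
      exact hY2
    linarith
  -- final assembly
  have hNK : (N:ℝ) + K ≤ 4 * Y := by
    have : Real.exp 1 < 3 := by
      have := Real.exp_one_lt_d9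
      norm_num at this ⊢
      linarith
    nlinarith
  have hfinal : (S.ncard : ℝ) ≤ 4 * Y * ((t:ℝ) + 2)^2 := by
    have hc : (S.ncard : ℝ) ≤ (F.card : ℝ) := by exact_mod_cast hcard
    have hHsq : H * H ≤ ((t:ℝ) + 2)^2 := by nlinarith
    have hNK0 : (0:ℝ) ≤ (N:ℝ) + K := by positivity
    calc (S.ncard : ℝ) ≤ (F.card : ℝ) := hc
      _ ≤ ∑ q ∈ P, ((N:ℝ) / (q.1 * q.2) + 1) := hstep1
      _ ≤ ∑ q ∈ P, ((N:ℝ) + K) / (q.1 * q.2) := hstep2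
      _ ≤ ((N:ℝ) + K) * (H * H) := hstep3
      _ ≤ (4 * Y) * ((t:ℝ) + 2)^2 := by
          apply mul_le_mul hNK hHsq (by positivity) (by positivity)
      _ = 4 * Y * ((t:ℝ) + 2)^2 := by ring
  refine le_trans hfinal ?_
  nlinarith
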